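/- Transition rule through an odd reflection, atypical case: let 1 ≤ i ≤ N−1 with s_i ≠ s_{i+1}, and let V be an irreducible (simple) highest weight U_q(gl_{m|n,s})-module with highest weight Λ = (λ_1, …, λ_N) and maximal vector ζ. Assume λ_i = λ_{i+1} (in the paper's normalization λ_j = q_j^{Λ_j}, this is the condition Λ_i + Λ_{i+1} = 0). Then the transported module V^β over U_q(gl_{m|n,s′}) is an irreducible highest weight module with the same maximal vector ζ, whose highest weight equals, up to a sign twist, Λ^{[i]} := (λ_1, …, λ_{i−1}, λ_{i+1}, λ_i, λ_{i+2}, …, λ_N). -/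

import Mathlib

namespace Stmt10

noncomputable section

/-- `(-1)^x` for `x : ZMod 2`. -/
def neg1 (x : ZMod 2) : ℂ := if x = 0 then 1 else -1

/-- `q_i = q^{d_i}` where `d_i = (-1)^{s_i}`. -/
def qp (q : ℂ) (s : ℕ → ZMod 2) (i : ℕ) : ℂ := if s i = 0 then q else q⁻¹

/-- The sign `ς_{ab;cd} = (−1)^{(|a|+|b|)(|c|+|d|)}`. -/
def sg (s : ℕ → ZMod 2) (a b c d : ℕ) : ℂ := neg1 ((s a + s b) * (s c + s d))

/-- `i` lies in the index range `{1, …, Nn}`. -/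
def inR (Nn i : ℕ) : Prop := 1 ≤ i ∧ i ≤ Nn

/-- Generators of the RTT quantum general linear superalgebra. -/
inductive FGen : Type
  | t : ℕ → ℕ → FGen
  | tb : ℕ → ℕ → FGen

/-- The free algebra on the RTT generators. -/
abbrev FA : Type := FreeAlgebra ℂ FGen

/-- The generator `t_{ij}` in the free algebra. -/
def ft (i j : ℕ) : FA := FreeAlgebra.ι ℂ (FGen.t i j)

/-- The generator `t̄_{ij}` in the free algebra. -/
def fb (i j : ℕ) : FA := FreeAlgebra.ι ℂ (FGen.tb i j)

/-- Defining relations of the RTT quantum general linear superalgebra `U_q(gl_{m|n,s})`. -/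
inductive FRel (Nn : ℕ) (q : ℂ) (s : ℕ → ZMod 2) : FA → FA → Prop
  | zt : ∀ i j : ℕ, (¬ inR Nn i ∨ ¬ inR Nn j ∨ i < j) → FRel Nn q s (ft i j) 0
  | zb : ∀ i j : ℕ, (¬ inR Nn i ∨ ¬ inR Nn j ∨ j < i) → FRel Nn q s (fb i j) 0
  | unit_tb : ∀ i : ℕ, inR Nn i → FRel Nn q s (ft i i * fb i i) 1
  | unit_bt : ∀ i : ℕ, inR Nn i → FRel Nn q s (fb i i * ft i i) 1
  | rtt_tt : ∀ i j k l : ℕ, inR Nn i → inR Nn j → inR Nn k → inR Nn l →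
      FRel Nn q s
        ((if i = k then qp q s i else 1) • (ft i j * ft k l)
          - (sg s i j k l * (if j = l then qp q s j else 1)) • (ft k l * ft i j))
        ((sg s i k k l * (qp q s k - (qp q s k)⁻¹)
            * ((if j < l then (1 : ℂ) else 0) - (if k < i then (1 : ℂ) else 0))) • (ft k j * ft i l))
  | rtt_bb : ∀ i j k l : ℕ, inR Nn i → inR Nn j → inR Nn k → inR Nn l →
      FRel Nn q s
        ((if i = k then qp q s i else 1) • (fb i j * fb k l)
          - (sg s i j k l * (if j = l then qp q s j else 1)) • (fb k l * fb i j))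
        ((sg s i k k l * (qp q s k - (qp q s k)⁻¹)
            * ((if j < l then (1 : ℂ) else 0) - (if k < i then (1 : ℂ) else 0))) • (fb k j * fb i l))
  | rtt_tb : ∀ i j k l : ℕ, inR Nn i → inR Nn j → inR Nn k → inR Nn l →
      FRel Nn q s
        ((if i = k then qp q s i else 1) • (ft i j * fb k l)
          - (sg s i j k l * (if j = l then qp q s j else 1)) • (fb k l * ft i j))
        ((sg s i k k l * (qp q s k - (qp q s k)⁻¹)) •
          ((if j < l then (1 : ℂ) else 0) • (fb k j * ft i l)
            - (if k < i then (1 : ℂ) else 0) • (ft k j * fb i l)))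

/-- The RTT quantum general linear superalgebra `U_q(gl_{m|n,s})`. -/
abbrev UF (Nn : ℕ) (q : ℂ) (s : ℕ → ZMod 2) : Type := RingQuot (FRel Nn q s)

/-- The generator `t_{ij}` of `U_q(gl_{m|n,s})` (zero for `i < j` or out-of-range indices). -/
def Tt (Nn : ℕ) (q : ℂ) (s : ℕ → ZMod 2) (i j : ℕ) : UF Nn q s :=
  RingQuot.mkAlgHom ℂ (FRel Nn q s) (ft i j)

/-- The generator `t̄_{ij}` of `U_q(gl_{m|n,s})` (zero for `j < i` or out-of-range indices). -/
def Tb (Nn : ℕ) (q : ℂ) (s : ℕ → ZMod 2) (i j : ℕ) : UF Nn q s :=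
  RingQuot.mkAlgHom ℂ (FRel Nn q s) (fb i j)

section ScalarAux

lemma zmod2_add_self (x : ZMod 2) : x + x = 0 := by revert x; decide

lemma neg1_mul_self (x : ZMod 2) : neg1 x * neg1 x = 1 := by
  unfold neg1; split <;> norm_num

lemma neg1_ne_zero (x : ZMod 2) : neg1 x ≠ 0 := by
  unfold neg1; split <;> norm_num

lemma neg1_cases (x : ZMod 2) : neg1 x = 1 ∨ neg1 x = -1 := by
  unfold neg1; split <;> simp

lemma neg1_zero : neg1 0 = 1 := by unfold neg1; simp

lemma sg_diag_right (s : ℕ → ZMod 2) (a b j : ℕ) : sg s a b j j = 1 := by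
  unfold sg; rw [zmod2_add_self, mul_zero, neg1_zero]

lemma sg_ne_zero (s : ℕ → ZMod 2) (a b c d : ℕ) : sg s a b c d ≠ 0 :=
  neg1_ne_zero _

lemma sg_mul_self (s : ℕ → ZMod 2) (a b c d : ℕ) : sg s a b c d * sg s a b c d = 1 :=
  neg1_mul_self _

lemma qp_ne_zero {q : ℂ} (hq0 : q ≠ 0) (s : ℕ → ZMod 2) (j : ℕ) : qp q s j ≠ 0 := by
  unfold qp; split
  · exact hq0
  · exact inv_ne_zero hq0

lemma q_zpow_ne_one {q : ℂ} (hq0 : q ≠ 0) (hqru : ∀ k : ℕ, k ≠ 0 → q ^ k ≠ 1) :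
    ∀ m : ℤ, m ≠ 0 → q ^ m ≠ 1 := by
  intro m hm
  rcases m with n | n
  · rw [Int.ofNat_eq_coe, zpow_natCast]
    exact hqru n (by exact_mod_cast fun h => hm (by simp [h]))
  · rw [zpow_negSucc]
    rw [ne_eq, inv_eq_one]
    exact hqru (n+1) (Nat.succ_ne_zero n)

lemma qp_zpow_ne_one {q : ℂ} (hq0 : q ≠ 0) (hqru : ∀ k : ℕ, k ≠ 0 → q ^ k ≠ 1)
    (s : ℕ → ZMod 2) (j : ℕ) : ∀ m : ℤ, m ≠ 0 → (qp q s j) ^ m ≠ 1 := by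
  intro m hm
  unfold qp; split
  · exact q_zpow_ne_one hq0 hqru m hm
  · rw [← zpow_neg_one, ← zpow_mul]
    exact q_zpow_ne_one hq0 hqru _ (by omega)

end ScalarAux
section Core

variable {Nn : ℕ} {q : ℂ} {s : ℕ → ZMod 2}

lemma mk_rel {a b : FA} (h : FRel Nn q s a b) :
    RingQuot.mkAlgHom ℂ (FRel Nn q s) a = RingQuot.mkAlgHom ℂ (FRel Nn q s) b :=
  RingQuot.mkAlgHom_rel ℂ h

lemma Tt_zero {a b : ℕ} (h : ¬ inR Nn a ∨ ¬ inR Nn b ∨ a < b) : Tt Nn q s a b = 0 := by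
  have := mk_rel (FRel.zt (q := q) (s := s) a b h)
  simpa [Tt] using this

lemma Tb_zero {a b : ℕ} (h : ¬ inR Nn a ∨ ¬ inR Nn b ∨ b < a) : Tb Nn q s a b = 0 := by
  have := mk_rel (FRel.zb (q := q) (s := s) a b h)
  simpa [Tb] using this

lemma unit_tb {j : ℕ} (hj : inR Nn j) : Tt Nn q s j j * Tb Nn q s j j = 1 := by
  have := mk_rel (FRel.unit_tb (q := q) (s := s) j hj)
  simpa [Tt, Tb] using this

lemma unit_bt {j : ℕ} (hj : inR Nn j) : Tb Nn q s j j * Tt Nn q s j j = 1 := by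
  have := mk_rel (FRel.unit_bt (q := q) (s := s) j hj)
  simpa [Tt, Tb] using this

lemma rel_tb (a b c d : ℕ) (ha : inR Nn a) (hb : inR Nn b) (hc : inR Nn c) (hd : inR Nn d) :
    (if a = c then qp q s a else 1) • (Tt Nn q s a b * Tb Nn q s c d)
      - (sg s a b c d * (if b = d then qp q s b else 1)) • (Tb Nn q s c d * Tt Nn q s a b)
    = (sg s a c c d * (qp q s c - (qp q s c)⁻¹)) •
        ((if b < d then (1:ℂ) else 0) • (Tb Nn q s c b * Tt Nn q s a d)
          - (if c < a then (1:ℂ) else 0) • (Tt Nn q s c b * Tb Nn q s a d)) := by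
  have h := mk_rel (FRel.rtt_tb (q := q) (s := s) a b c d ha hb hc hd)
  simp only [map_sub, map_smul, map_mul] at h
  exact h

lemma rel_bb (a b c d : ℕ) (ha : inR Nn a) (hb : inR Nn b) (hc : inR Nn c) (hd : inR Nn d) :
    (if a = c then qp q s a else 1) • (Tb Nn q s a b * Tb Nn q s c d)
      - (sg s a b c d * (if b = d then qp q s b else 1)) • (Tb Nn q s c d * Tb Nn q s a b)
    = (sg s a c c d * (qp q s c - (qp q s c)⁻¹)
        * ((if b < d then (1:ℂ) else 0) - (if c < a then (1:ℂ) else 0))) •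
        (Tb Nn q s c b * Tb Nn q s a d) := by
  have h := mk_rel (FRel.rtt_bb (q := q) (s := s) a b c d ha hb hc hd)
  simp only [map_sub, map_smul, map_mul] at h
  exact h

variable {V : Type} [AddCommGroup V] [Module ℂ V] (ρ : UF Nn q s →ₐ[ℂ] Module.End ℂ V)

/-- The operator attached to a generator. -/
def Eop (g : FGen) : Module.End ℂ V :=
  match g with
  | .t a b => ρ (Tt Nn q s a b)
  | .tb a b => ρ (Tb Nn q s a b)

lemma Eop_t (a b : ℕ) : Eop ρ (.t a b) = ρ (Tt Nn q s a b) := rfl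
lemma Eop_tb (a b : ℕ) : Eop ρ (.tb a b) = ρ (Tb Nn q s a b) := rfl

lemma rel_tb_apply (a b c d : ℕ) (ha : inR Nn a) (hb : inR Nn b) (hc : inR Nn c)
    (hd : inR Nn d) (w : V) :
    (if a = c then qp q s a else 1) • ρ (Tt Nn q s a b) (ρ (Tb Nn q s c d) w)
      - (sg s a b c d * (if b = d then qp q s b else 1)) •
          ρ (Tb Nn q s c d) (ρ (Tt Nn q s a b) w)
    = (sg s a c c d * (qp q s c - (qp q s c)⁻¹)) •
        ((if b < d then (1:ℂ) else 0) • ρ (Tb Nn q s c b) (ρ (Tt Nn q s a d) w)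
          - (if c < a then (1:ℂ) else 0) • ρ (Tt Nn q s c b) (ρ (Tb Nn q s a d) w)) := by
  have h := congrArg ρ (rel_tb a b c d ha hb hc hd)
  simp only [map_sub, map_smul, map_mul] at h
  have h2 := LinearMap.congr_fun h w
  simp only [LinearMap.sub_apply, LinearMap.smul_apply, Module.End.mul_apply] at h2
  exact h2

lemma rel_bb_apply (a b c d : ℕ) (ha : inR Nn a) (hb : inR Nn b) (hc : inR Nn c)
    (hd : inR Nn d) (w : V) :
    (if a = c then qp q s a else 1) • ρ (Tb Nn q s a b) (ρ (Tb Nn q s c d) w)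
      - (sg s a b c d * (if b = d then qp q s b else 1)) •
          ρ (Tb Nn q s c d) (ρ (Tb Nn q s a b) w)
    = (sg s a c c d * (qp q s c - (qp q s c)⁻¹)
        * ((if b < d then (1:ℂ) else 0) - (if c < a then (1:ℂ) else 0))) •
        ρ (Tb Nn q s c b) (ρ (Tb Nn q s a d) w) := by
  have h := congrArg ρ (rel_bb a b c d ha hb hc hd)
  simp only [map_sub, map_smul, map_mul] at h
  have h2 := LinearMap.congr_fun h w
  simp only [LinearMap.sub_apply, LinearMap.smul_apply, Module.End.mul_apply] at h2
  exact h2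

end Core
/-- Row index of a generator. -/
def grow : FGen → ℕ | .t a _ => a | .tb a _ => a
/-- Column index of a generator. -/
def gcol : FGen → ℕ | .t _ b => b | .tb _ b => b
/-- Both indices in range. -/
def gInR (Nn : ℕ) (g : FGen) : Prop := inR Nn (grow g) ∧ inR Nn (gcol g)
/-- The ℤ^N-degree of a generator, as a finitely supported function. -/
def dgF (g : FGen) : ℕ →₀ ℤ := Finsupp.single (grow g) 1 - Finsupp.single (gcol g) 1

lemma dgF_apply (g : FGen) (j : ℕ) :
    dgF g j = (if grow g = j then (1:ℤ) else 0) - (if gcol g = j then 1 else 0) := by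
  simp [dgF, Finsupp.single_apply]

section CoreV

variable {Nn : ℕ} {q : ℂ} {s : ℕ → ZMod 2}
variable {V : Type} [AddCommGroup V] [Module ℂ V]
variable {ρ : UF Nn q s →ₐ[ℂ] Module.End ℂ V}
variable {lam : ℕ → ℂ} {ζ : V}

/-- Action of the diagonal `t_{jj}` on the maximal vector. -/
lemma Tt_diag_apply (hhw1 : ∀ j : ℕ, 1 ≤ j → j ≤ Nn → ρ (Tb Nn q s j j) ζ = lam j • ζ)
    (hlam : ∀ j : ℕ, 1 ≤ j → j ≤ Nn → lam j ≠ 0) {j : ℕ} (hj : inR Nn j) :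
    ρ (Tt Nn q s j j) ζ = (lam j)⁻¹ • ζ := by
  have h2 : ρ (Tt Nn q s j j * Tb Nn q s j j) ζ = ζ := by
    rw [unit_tb hj]; simp
  rw [map_mul] at h2
  rw [Module.End.mul_apply, hhw1 j hj.1 hj.2, map_smul] at h2
  rw [eq_comm, ← inv_smul_eq_iff₀ (hlam j hj.1 hj.2)] at h2
  rw [← h2]

/-- helper to turn `c₁ • X = c₂ • Y` into `Y = (c₂⁻¹ * c₁) • X`. -/
lemma smul_flip {c₁ c₂ : ℂ} {X Y : V} (hc₂ : c₂ ≠ 0) (h : c₁ • X = c₂ • Y) :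
    Y = (c₂⁻¹ * c₁) • X := by
  rw [← inv_smul_smul₀ hc₂ Y, ← h, smul_smul]

/-- Exact q-commutation of the diagonal `t̄_{jj}` with `t_{ab}`. -/
lemma Dcomm_t (hq0 : q ≠ 0) {j a b : ℕ} (hj : inR Nn j) (ha : inR Nn a) (hb : inR Nn b)
    (w : V) : ρ (Tb Nn q s j j) (ρ (Tt Nn q s a b) w)
      = ((qp q s j) ^ (((if a = j then 1 else 0) - (if b = j then 1 else 0) : ℤ))) •
          ρ (Tt Nn q s a b) (ρ (Tb Nn q s j j) w) := by
  have H := rel_tb_apply ρ a b j j ha hb hj hj w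
  rw [sg_diag_right] at H
  have e1 : (if b < j then (1:ℂ) else 0) • ρ (Tb Nn q s j b) (ρ (Tt Nn q s a j) w) = 0 := by
    by_cases h : b < j
    · rw [Tb_zero (Or.inr (Or.inr h))]; simp
    · simp [h]
  have e2 : (if j < a then (1:ℂ) else 0) • ρ (Tt Nn q s j b) (ρ (Tb Nn q s a j) w) = 0 := by
    by_cases h : j < a
    · rw [Tb_zero (Or.inr (Or.inr h))]; simp
    · simp [h]
  rw [e1, e2, sub_zero, smul_zero, sub_eq_zero] at H
  have H2 := smul_flip (V := V)
    (c₂ := 1 * (if b = j then qp q s b else 1)) (by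
      by_cases h : b = j <;> simp [h, qp_ne_zero hq0]) H
  rw [H2]
  congr 1
  by_cases hab : a = j <;> by_cases hbj : b = j <;>
    simp [hab, hbj, zpow_sub₀ (qp_ne_zero hq0 s j), div_self (qp_ne_zero hq0 s j), inv_mul_cancel₀ (qp_ne_zero hq0 s j)]

/-- Exact q-commutation of the diagonal `t̄_{jj}` with `t̄_{ab}`. -/
lemma Dcomm_b (hq0 : q ≠ 0) {j a b : ℕ} (hj : inR Nn j) (ha : inR Nn a) (hb : inR Nn b)
    (w : V) : ρ (Tb Nn q s j j) (ρ (Tb Nn q s a b) w)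
      = ((qp q s j) ^ (((if a = j then 1 else 0) - (if b = j then 1 else 0) : ℤ))) •
          ρ (Tb Nn q s a b) (ρ (Tb Nn q s j j) w) := by
  have H := rel_bb_apply ρ a b j j ha hb hj hj w
  rw [sg_diag_right] at H
  have e0 : (sg s a j j j * (qp q s j - (qp q s j)⁻¹)
      * ((if b < j then (1:ℂ) else 0) - (if j < a then 1 else 0))) •
        ρ (Tb Nn q s j b) (ρ (Tb Nn q s a j) w) = 0 := by
    by_cases h1 : b < j
    · rw [Tb_zero (Or.inr (Or.inr h1))]; simp
    · by_cases h2 : j < a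
      · rw [Tb_zero (b := j) (Or.inr (Or.inr h2))]; simp
      · simp [h1, h2]
  rw [e0, sub_eq_zero] at H
  have H2 := smul_flip (V := V)
    (c₂ := 1 * (if b = j then qp q s b else 1)) (by
      by_cases h : b = j <;> simp [h, qp_ne_zero hq0]) H
  rw [H2]
  congr 1
  by_cases hab : a = j <;> by_cases hbj : b = j <;>
    simp [hab, hbj, zpow_sub₀ (qp_ne_zero hq0 s j), div_self (qp_ne_zero hq0 s j), inv_mul_cancel₀ (qp_ne_zero hq0 s j)]

end CoreV
section CoreW

variable {Nn : ℕ} {q : ℂ} {s : ℕ → ZMod 2}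
variable {V : Type} [AddCommGroup V] [Module ℂ V]
variable {ρ : UF Nn q s →ₐ[ℂ] Module.End ℂ V}
variable {lam : ℕ → ℂ} {ζ : V}

/-- Exact q-commutation of `t̄_{jj}` with any generator. -/
lemma Dcomm (hq0 : q ≠ 0) {j : ℕ} (hj : inR Nn j) {g : FGen} (hg : gInR Nn g) (w : V) :
    ρ (Tb Nn q s j j) (Eop ρ g w)
      = ((qp q s j) ^ (dgF g j)) • Eop ρ g (ρ (Tb Nn q s j j) w) := by
  cases g with
  | t a b =>
      rw [Eop_t, dgF_apply]
      exact Dcomm_t hq0 hj hg.1 hg.2 w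
  | tb a b =>
      rw [Eop_tb, dgF_apply]
      exact Dcomm_b hq0 hj hg.1 hg.2 w

/-- Simultaneous eigenvector property for the diagonal operators. -/
def EigV (Nn : ℕ) (q : ℂ) (s : ℕ → ZMod 2) (ρ : UF Nn q s →ₐ[ℂ] Module.End ℂ V)
    (lam : ℕ → ℂ) (ν : ℕ →₀ ℤ) (w : V) : Prop :=
  ∀ j, inR Nn j → ρ (Tb Nn q s j j) w = ((qp q s j) ^ (ν j) * lam j) • w

lemma EigV_zero_vec (ν : ℕ →₀ ℤ) : EigV Nn q s ρ lam ν (0 : V) := by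
  intro j hj; simp

lemma EigV_zeta (hhw1 : ∀ j : ℕ, 1 ≤ j → j ≤ Nn → ρ (Tb Nn q s j j) ζ = lam j • ζ) :
    EigV Nn q s ρ lam 0 ζ := by
  intro j hj
  simpa using hhw1 j hj.1 hj.2

lemma EigV_step (hq0 : q ≠ 0) {ν : ℕ →₀ ℤ} {w : V} (hw : EigV Nn q s ρ lam ν w)
    {g : FGen} (hg : gInR Nn g) : EigV Nn q s ρ lam (dgF g + ν) (Eop ρ g w) := by
  intro j hj
  rw [Dcomm hq0 hj hg, hw j hj, map_smul, Finsupp.add_apply,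
    zpow_add₀ (qp_ne_zero hq0 s j), smul_smul, ← mul_assoc]

end CoreW
section Kill

variable {Nn : ℕ} {q : ℂ} {s : ℕ → ZMod 2}
variable {V : Type} [AddCommGroup V] [Module ℂ V]
variable {ρ : UF Nn q s →ₐ[ℂ] Module.End ℂ V}
variable {lam : ℕ → ℂ} {ζ : V} {i : ℕ}

/-- All raising generators annihilate `v = t_{i+1,i} ζ` (atypicality). -/
lemma raise_kill (hq0 : q ≠ 0)
    (hlam : ∀ j : ℕ, 1 ≤ j → j ≤ Nn → lam j ≠ 0)
    (hhw0 : ∀ j k : ℕ, 1 ≤ j → j < k → k ≤ Nn → ρ (Tb Nn q s j k) ζ = 0)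
    (hhw1 : ∀ j : ℕ, 1 ≤ j → j ≤ Nn → ρ (Tb Nn q s j j) ζ = lam j • ζ)
    (hi1 : 1 ≤ i) (hi2 : i + 1 ≤ Nn) (hatyp : lam i = lam (i + 1))
    (a b : ℕ) (hab : a < b) :
    ρ (Tb Nn q s a b) (ρ (Tt Nn q s (i+1) i) ζ) = 0 := by
  by_cases hra : inR Nn a
  · by_cases hrb : inR Nn b
    · have hri : inR Nn i := ⟨hi1, by omega⟩
      have hri1 : inR Nn (i+1) := ⟨by omega, hi2⟩
      have H := rel_tb_apply ρ (i+1) i a b hri1 hri hra hrb ζ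
      have hB : ρ (Tb Nn q s a b) ζ = 0 := hhw0 a b hra.1 hab hrb.2
      rw [hB, map_zero, smul_zero] at H
      rw [zero_sub, neg_eq_iff_eq_neg] at H
      -- H : c • (Tb a b) v = - RHS ; show RHS = 0
      have hRHS : (if i < b then (1:ℂ) else 0) • ρ (Tb Nn q s a i) (ρ (Tt Nn q s (i+1) b) ζ)
          - (if a < i+1 then (1:ℂ) else 0) • ρ (Tt Nn q s a i) (ρ (Tb Nn q s (i+1) b) ζ)
          = 0 := by
        rcases lt_trichotomy b (i+1) with hb1 | hb1 | hb1
        · have e2 : Tb Nn q s (i+1) b = 0 := Tb_zero (Or.inr (Or.inr hb1))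
          rw [e2, if_neg (show ¬ i < b by omega)]
          simp
        · subst hb1
          have e1 : ρ (Tt Nn q s (i+1) (i+1)) ζ = (lam (i+1))⁻¹ • ζ :=
            Tt_diag_apply hhw1 hlam hri1
          have e2 : ρ (Tb Nn q s (i+1) (i+1)) ζ = lam (i+1) • ζ :=
            hhw1 (i+1) (by omega) hi2
          rw [e1, e2, map_smul, map_smul]
          rcases lt_or_eq_of_le (Nat.lt_succ_iff.mp hab) with hai | hai
          · have e3 : ρ (Tb Nn q s a i) ζ = 0 := hhw0 a i hra.1 hai (by omega)
            have e4 : Tt Nn q s a i = 0 := Tt_zero (Or.inr (Or.inr hai))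
            rw [e3, e4]
            simp
          · have e3 : ρ (Tb Nn q s a i) ζ = lam i • ζ := by
              rw [hai]; exact hhw1 i hi1 (by omega)
            have e4 : ρ (Tt Nn q s a i) ζ = (lam i)⁻¹ • ζ := by
              rw [hai]; exact Tt_diag_apply hhw1 hlam hri
            have hl : lam (i+1) ≠ 0 := hlam (i+1) (by omega) hi2
            rw [e3, e4, if_pos (show i < i + 1 by omega),
              if_pos (show a < i + 1 by omega), one_smul, one_smul, hatyp,
              inv_smul_smul₀ hl, smul_inv_smul₀ hl, sub_self]
        · have e1 : Tt Nn q s (i+1) b = 0 := Tt_zero (Or.inr (Or.inr hb1))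
          have e2 : ρ (Tb Nn q s (i+1) b) ζ = 0 := hhw0 (i+1) b (by omega) hb1 hrb.2
          rw [e1, e2]
          simp
      rw [hRHS, smul_zero, neg_zero, smul_eq_zero] at H
      rcases H with H | H
      · exfalso
        rcases mul_eq_zero.mp H with H | H
        · exact sg_ne_zero s (i+1) i a b H
        · by_cases hbi : i = b
          · rw [if_pos hbi] at H; exact qp_ne_zero hq0 s i H
          · rw [if_neg hbi] at H; exact one_ne_zero H
      · exact H
    · rw [Tb_zero (Or.inr (Or.inl hrb)), map_zero, LinearMap.zero_apply]
  · rw [Tb_zero (Or.inl hra), map_zero, LinearMap.zero_apply]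

end Kill
/-- Is the generator a raising one? -/
def isRaise : FGen → Bool | .tb a b => decide (a < b) | _ => false
/-- Width of a raising generator. -/
def wgt : FGen → ℕ | .tb a b => b - a | _ => 0
/-- First component of the termination measure. -/
def mu1 : List FGen → ℕ
  | [] => 0
  | g :: L => mu1 L + (if isRaise g then L.length else 0)
/-- Second component of the termination measure. -/
def mu2 (L : List FGen) : ℕ := (L.map wgt).sum
/-- Total degree of a monomial. -/
def degL (L : List FGen) : ℕ →₀ ℤ := (L.map dgF).sum
/-- Number of raising generators. -/
def rcount (L : List FGen) : ℕ := L.countP (fun g => isRaise g)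

lemma mu1_append (A B : List FGen) :
    mu1 (A ++ B) = mu1 A + mu1 B + rcount A * B.length := by
  induction A with
  | nil => simp [mu1, rcount]
  | cons g A ih =>
      by_cases h : isRaise g
      · have e1 : mu1 ((g :: A) ++ B) = mu1 (A ++ B) + (A.length + B.length) := by
          simp [mu1, h]
        have e2 : mu1 (g :: A) = mu1 A + A.length := by simp [mu1, h]
        have e3 : rcount (g :: A) = rcount A + 1 := by
          simp [rcount, List.countP_cons, h]
        rw [e1, e2, e3, ih]; ring
      · have e1 : mu1 ((g :: A) ++ B) = mu1 (A ++ B) := by simp [mu1, h]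
        have e2 : mu1 (g :: A) = mu1 A := by simp [mu1, h]
        have e3 : rcount (g :: A) = rcount A := by
          simp [rcount, List.countP_cons, h]
        rw [e1, e2, e3, ih]

lemma mu2_append (A B : List FGen) : mu2 (A ++ B) = mu2 A + mu2 B := by
  simp [mu2]

lemma degL_append (A B : List FGen) : degL (A ++ B) = degL A + degL B := by
  simp [degL]

lemma degL_cons (g : FGen) (L : List FGen) : degL (g :: L) = dgF g + degL L := by
  simp [degL]

section Op

variable {Nn : ℕ} {q : ℂ} {s : ℕ → ZMod 2}
variable {V : Type} [AddCommGroup V] [Module ℂ V]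
variable (ρ : UF Nn q s →ₐ[ℂ] Module.End ℂ V)

/-- The operator attached to a monomial. -/
def opL (L : List FGen) : Module.End ℂ V := (L.map (Eop ρ)).prod

lemma opL_nil : opL ρ [] = 1 := rfl

lemma opL_cons (g : FGen) (L : List FGen) (w : V) :
    opL ρ (g :: L) w = Eop ρ g (opL ρ L w) := by
  simp [opL, Module.End.mul_apply]

lemma opL_append (A B : List FGen) (w : V) :
    opL ρ (A ++ B) w = opL ρ A (opL ρ B w) := by
  simp [opL, Module.End.mul_apply]

variable {ρ}

/-- helper for rearranging the RTT relation. -/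
lemma rearrange {c₁ c₂ sq i1 i2 : ℂ} {X1 X2 Y1 Y2 : V} (hc₂ : c₂ ≠ 0)
    (h : c₁ • X1 - c₂ • X2 = sq • (i1 • Y1 - i2 • Y2)) :
    X2 = (c₂⁻¹ * c₁) • X1
      + ((-(c₂⁻¹ * sq * i1)) • Y1 + ((c₂⁻¹ * sq * i2) • Y2 + 0)) := by
  have h3 : c₂⁻¹ • (c₁ • X1 - c₂ • X2) = c₂⁻¹ • (sq • (i1 • Y1 - i2 • Y2)) := by rw [h]
  rw [smul_sub, smul_smul, smul_smul, inv_mul_cancel₀ hc₂, one_smul] at h3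
  have h4 : X2 = (c₂⁻¹ * c₁) • X1 - c₂⁻¹ • (sq • (i1 • Y1 - i2 • Y2)) := by
    rw [← h3]; abel
  rw [h4]
  module

/-- Swapping a raising generator past a `t`-generator. -/
lemma swap_bt (hq0 : q ≠ 0) {k l a b : ℕ} (hkl : k < l) (hk : inR Nn k) (hl : inR Nn l)
    (ha : inR Nn a) (hb : inR Nn b) :
    ∃ c₀ : ℂ, ∃ ts : List (ℂ × FGen × FGen),
      (∀ w : V, Eop ρ (.tb k l) (Eop ρ (.t a b) w)
        = c₀ • Eop ρ (.t a b) (Eop ρ (.tb k l) w)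
          + (ts.map (fun p => p.1 • Eop ρ p.2.1 (Eop ρ p.2.2 w))).sum)
      ∧ ∀ p ∈ ts, p.1 = 0 ∨
          (dgF p.2.1 + dgF p.2.2 = dgF (FGen.tb k l) + dgF (FGen.t a b)
           ∧ (isRaise p.2.1 = false
              ∨ (isRaise p.2.2 = false ∧ wgt p.2.1 < wgt (FGen.tb k l)))) := by
  have hc₂ : sg s a b k l * (if b = l then qp q s b else 1) ≠ 0 := by
    by_cases h : b = l <;> simp [h, sg_ne_zero, qp_ne_zero hq0]
  refine ⟨(sg s a b k l * (if b = l then qp q s b else 1))⁻¹ * (if a = k then qp q s a else 1),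
    [(-( (sg s a b k l * (if b = l then qp q s b else 1))⁻¹
        * (sg s a k k l * (qp q s k - (qp q s k)⁻¹)) * (if b < l then 1 else 0)),
      (FGen.tb k b, FGen.t a l)),
     (((sg s a b k l * (if b = l then qp q s b else 1))⁻¹
        * (sg s a k k l * (qp q s k - (qp q s k)⁻¹)) * (if k < a then 1 else 0)),
      (FGen.t k b, FGen.tb a l))], ?_, ?_⟩
  · intro w
    have H := rel_tb_apply ρ a b k l ha hb hk hl w
    have := rearrange (V := V) hc₂ H
    simpa [Eop_t, Eop_tb] using this
  · intro p hp
    simp only [List.mem_cons, List.mem_singleton, List.not_mem_nil, or_false] at hp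
    rcases hp with rfl | rfl
    · by_cases hbl : b < l
      · right
        refine ⟨by simp only [dgF, grow, gcol]; abel, ?_⟩
        by_cases hkb : k < b
        · right
          exact ⟨by simp [isRaise], by simp only [wgt]; omega⟩
        · left; simp [isRaise, hkb]
      · left; simp [hbl]
    · right
      exact ⟨by simp only [dgF, grow, gcol]; abel, Or.inl (by simp [isRaise])⟩

/-- Swapping a raising generator past a diagonal `t̄`-generator. -/
lemma swap_bdiag (hq0 : q ≠ 0) {k l a : ℕ} (hk : inR Nn k) (hl : inR Nn l)
    (ha : inR Nn a) (w : V) :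
    Eop ρ (.tb k l) (Eop ρ (.tb a a) w)
      = ((qp q s a ^ (dgF (FGen.tb k l) a))⁻¹) • Eop ρ (.tb a a) (Eop ρ (.tb k l) w) := by
  have H := Dcomm_b (ρ := ρ) hq0 ha hk hl w
  have e : ((if k = a then (1:ℤ) else 0) - (if l = a then 1 else 0))
      = dgF (FGen.tb k l) a := by
    rw [dgF_apply]; simp [grow, gcol]; rfl
  rw [e] at H
  have hc : qp q s a ^ (dgF (FGen.tb k l) a) ≠ 0 :=
    zpow_ne_zero _ (qp_ne_zero hq0 s a)
  rw [Eop_tb, Eop_tb, H, smul_smul, inv_mul_cancel₀ hc, one_smul]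

end Op
/-- Goodness: the generator is not forced to be zero. -/
def gGood (Nn : ℕ) : FGen → Prop
  | .t a b => inR Nn a ∧ inR Nn b ∧ b ≤ a
  | .tb a b => inR Nn a ∧ inR Nn b ∧ a ≤ b

/-- Linear functional detecting lowering. -/
def Hf (μ : ℕ →₀ ℤ) : ℤ := μ.sum fun j m => (j : ℤ) * m

lemma Hf_add (μ ν : ℕ →₀ ℤ) : Hf (μ + ν) = Hf μ + Hf ν :=
  Finsupp.sum_add_index' (by simp) (fun a b1 b2 => mul_add _ _ _)

lemma Hf_single (a : ℕ) (n : ℤ) : Hf (Finsupp.single a n) = a * n :=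
  Finsupp.sum_single_index (by simp)

lemma Hf_dgF (g : FGen) : Hf (dgF g) = (grow g : ℤ) - gcol g := by
  unfold Hf dgF
  rw [Finsupp.sum_sub_index (fun a _ _ => mul_sub _ _ _)]
  have h1 := Hf_single (grow g) 1
  have h2 := Hf_single (gcol g) 1
  unfold Hf at h1 h2
  rw [h1, h2, mul_one, mul_one]

lemma Hf_zero : Hf 0 = 0 := Finsupp.sum_zero_index

lemma split_raise (L : List FGen) : (∀ g ∈ L, isRaise g = false) ∨
    ∃ A g C, L = A ++ g :: C ∧ isRaise g = true ∧ (∀ c ∈ C, isRaise c = false) := by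
  induction L with
  | nil => left; simp
  | cons g L ih =>
      rcases ih with h | ⟨A, g', C, rfl, hg', hC⟩
      · by_cases hg : isRaise g
        · right; exact ⟨[], g, L, rfl, hg, h⟩
        · left
          intro x hx
          rcases List.mem_cons.mp hx with rfl | hx
          · simpa using hg
          · exact h x hx
      · right; exact ⟨g :: A, g', C, rfl, hg', hC⟩

section Op2

variable {Nn : ℕ} {q : ℂ} {s : ℕ → ZMod 2}
variable {V : Type} [AddCommGroup V] [Module ℂ V]
variable {ρ : UF Nn q s →ₐ[ℂ] Module.End ℂ V}

lemma Eop_zero_of_bad {g : FGen} (h : ¬ gGood Nn g) : Eop ρ g = 0 := by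
  cases g with
  | t a b =>
      rw [Eop_t, Tt_zero, map_zero]
      unfold gGood at h
      by_cases h1 : inR Nn a
      · by_cases h2 : inR Nn b
        · exact Or.inr (Or.inr (by by_contra hc; exact h ⟨h1, h2, by omega⟩))
        · exact Or.inr (Or.inl h2)
      · exact Or.inl h1
  | tb a b =>
      rw [Eop_tb, Tb_zero, map_zero]
      unfold gGood at h
      by_cases h1 : inR Nn a
      · by_cases h2 : inR Nn b
        · exact Or.inr (Or.inr (by by_contra hc; exact h ⟨h1, h2, by omega⟩))
        · exact Or.inr (Or.inl h2)
      · exact Or.inl h1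

lemma opL_zero_of_bad {L : List FGen} (h : ∃ g ∈ L, ¬ gGood Nn g) :
    opL ρ L = 0 := by
  obtain ⟨g, hgL, hg⟩ := h
  apply List.prod_eq_zero
  rw [← Eop_zero_of_bad hg]
  exact List.mem_map_of_mem hgL

lemma Hf_degL_nonneg {L : List FGen} (hgood : ∀ g ∈ L, gGood Nn g)
    (hclean : ∀ g ∈ L, isRaise g = false) : 0 ≤ Hf (degL L) := by
  induction L with
  | nil => simp [degL, Hf_zero]
  | cons g L ih =>
      rw [degL_cons, Hf_add]
      have h1 : 0 ≤ Hf (dgF g) := by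
        rw [Hf_dgF]
        have hg := hgood g (by simp)
        have hc := hclean g (by simp)
        cases g with
        | t a b =>
            unfold gGood at hg
            obtain ⟨-, -, h3⟩ := hg
            simp only [grow, gcol]
            omega
        | tb a b =>
            unfold gGood at hg
            simp only [isRaise, decide_eq_true_eq] at hc
            simp only [grow, gcol]
            have : ¬ a < b := by simpa using hc
            omega
      have h2 : 0 ≤ Hf (degL L) :=
        ih (fun g hgL => hgood g (List.mem_cons_of_mem _ hgL))
          (fun g hgL => hclean g (List.mem_cons_of_mem _ hgL))
      omega

end Op2
lemma wgt_zero_of_clean {y : FGen} (h : isRaise y = false) : wgt y = 0 := by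
  cases y with
  | t a b => rfl
  | tb a b =>
      simp only [isRaise, decide_eq_false_iff_not] at h
      simp only [wgt]; omega

section SLem

variable {Nn : ℕ} {q : ℂ} {s : ℕ → ZMod 2}
variable {V : Type} [AddCommGroup V] [Module ℂ V]
variable {ρ : UF Nn q s →ₐ[ℂ] Module.End ℂ V}
variable {lam : ℕ → ℂ} {ζ : V} {i : ℕ}

lemma Slem (hq0 : q ≠ 0)
    (hlam : ∀ j : ℕ, 1 ≤ j → j ≤ Nn → lam j ≠ 0)
    (hhw0 : ∀ j k : ℕ, 1 ≤ j → j < k → k ≤ Nn → ρ (Tb Nn q s j k) ζ = 0)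
    (hhw1 : ∀ j : ℕ, 1 ≤ j → j ≤ Nn → ρ (Tb Nn q s j j) ζ = lam j • ζ)
    (hi1 : 1 ≤ i) (hi2 : i + 1 ≤ Nn) (hatyp : lam i = lam (i + 1)) :
    ∀ n1 n2 (L : List FGen), mu1 L = n1 → mu2 L = n2 →
      degL L = dgF (FGen.t i (i+1)) →
      opL ρ L (ρ (Tt Nn q s (i+1) i) ζ) = 0 := by
  intro n1
  induction n1 using Nat.strong_induction_on with
  | _ n1 ih1 =>
  intro n2
  induction n2 using Nat.strong_induction_on with
  | _ n2 ih2 =>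
  intro L hm1 hm2 hdeg
  by_cases hbad : ∃ g ∈ L, ¬ gGood Nn g
  · rw [opL_zero_of_bad hbad, LinearMap.zero_apply]
  push_neg at hbad
  rcases split_raise L with hclean | ⟨A, g, C, rfl, hg, hC⟩
  · exfalso
    have h1 := Hf_degL_nonneg hbad hclean
    rw [hdeg, Hf_dgF] at h1
    simp only [grow, gcol] at h1
    omega
  · obtain ⟨k, l, rfl, hkl⟩ : ∃ k l, g = FGen.tb k l ∧ k < l := by
      cases g with
      | t a b => simp [isRaise] at hg
      | tb a b => exact ⟨a, b, rfl, by simpa [isRaise] using hg⟩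
    have hgood : gGood Nn (FGen.tb k l) := hbad _ (by simp)
    have hkR : inR Nn k := hgood.1
    have hlR : inR Nn l := hgood.2.1
    cases C with
    | nil =>
        rw [opL_append, opL_cons, opL_nil, Module.End.one_apply, Eop_tb,
          raise_kill hq0 hlam hhw0 hhw1 hi1 hi2 hatyp k l hkl, map_zero]
    | cons c C' =>
        have hcgood : gGood Nn c := hbad c (by simp)
        have hcclean : isRaise c = false := hC c (by simp)
        obtain ⟨c₀, ts, hEq, hCond⟩ :
            ∃ c₀ : ℂ, ∃ ts : List (ℂ × FGen × FGen),
              (∀ w : V, Eop ρ (.tb k l) (Eop ρ c w)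
                = c₀ • Eop ρ c (Eop ρ (.tb k l) w)
                  + (ts.map (fun p => p.1 • Eop ρ p.2.1 (Eop ρ p.2.2 w))).sum)
              ∧ ∀ p ∈ ts, p.1 = 0 ∨
                  (dgF p.2.1 + dgF p.2.2 = dgF (FGen.tb k l) + dgF c
                   ∧ (isRaise p.2.1 = false
                      ∨ (isRaise p.2.2 = false ∧ wgt p.2.1 < wgt (FGen.tb k l)))) := by
          cases c with
          | t a b => exact swap_bt hq0 hkl hkR hlR hcgood.1 hcgood.2.1
          | tb a b =>
              have hab : a = b := by
                have h1 := hcgood.2.2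
                simp only [isRaise, decide_eq_false_iff_not] at hcclean
                omega
              subst hab
              refine ⟨(qp q s a ^ (dgF (FGen.tb k l) a))⁻¹, [], fun w => ?_, by simp⟩
              simpa using swap_bdiag hq0 hkR hlR hcgood.1 w
        -- measure bookkeeping
        have hM1 : ∀ x y : FGen, mu1 (A ++ x :: y :: C')
            = mu1 A + rcount A * (C'.length + 2) + mu1 C'
              + (if isRaise y then C'.length else 0)
              + (if isRaise x then C'.length + 1 else 0) := by
          intro x y
          rw [mu1_append]
          have h2 : mu1 (x :: y :: C') = mu1 C' + (if isRaise y then C'.length else 0)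
              + (if isRaise x then C'.length + 1 else 0) := by
            by_cases hx : isRaise x <;> by_cases hy : isRaise y <;>
              simp [mu1, hx, hy, List.length_cons]
          rw [h2]
          simp only [List.length_cons]
          ring
        have hM2 : ∀ x y : FGen, mu2 (A ++ x :: y :: C')
            = mu2 A + mu2 C' + wgt x + wgt y := by
          intro x y
          rw [mu2_append]
          simp only [mu2, List.map_cons, List.sum_cons]
          ring
        have hMd : ∀ x y : FGen, degL (A ++ x :: y :: C')
            = degL A + (dgF x + (dgF y + degL C')) := by
          intro x y
          rw [degL_append, degL_cons, degL_cons]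
        have hn1 : n1 = mu1 A + rcount A * (C'.length + 2) + mu1 C' + (C'.length + 1) := by
          rw [← hm1, hM1, hcclean, hg]
          simp
        have hn2 : n2 = mu2 A + mu2 C' + (l - k) := by
          rw [← hm2, hM2, wgt_zero_of_clean hcclean]
          simp [wgt]
        set v := ρ (Tt Nn q s (i+1) i) ζ with hvdef
        rw [opL_append, opL_cons, opL_cons, hEq (opL ρ C' v), map_add, map_smul]
        have hmain : opL ρ A (Eop ρ c (Eop ρ (.tb k l) (opL ρ C' v))) = 0 := by
          have e : opL ρ (A ++ c :: FGen.tb k l :: C') v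
              = opL ρ A (Eop ρ c (Eop ρ (.tb k l) (opL ρ C' v))) := by
            rw [opL_append, opL_cons, opL_cons]
          rw [← e]
          refine ih1 (mu1 (A ++ c :: FGen.tb k l :: C')) ?_ (mu2 _) _ rfl rfl ?_
          · rw [hM1, hcclean, hg, hn1]
            simp
          · rw [hMd, ← hdeg, hMd, add_left_comm (dgF c)]
        rw [hmain, smul_zero, zero_add, map_list_sum, List.map_map]
        apply List.sum_eq_zero
        intro z hz
        rw [List.mem_map] at hz
        obtain ⟨p, hp, rfl⟩ := hz
        simp only [Function.comp_apply]
        rw [map_smul]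
        rcases hCond p hp with h0 | ⟨hsum, hcond⟩
        · rw [h0, zero_smul]
        · have e : opL ρ (A ++ p.2.1 :: p.2.2 :: C') v
              = opL ρ A (Eop ρ p.2.1 (Eop ρ p.2.2 (opL ρ C' v))) := by
            rw [opL_append, opL_cons, opL_cons]
          rw [← e]
          have hdeg' : degL (A ++ p.2.1 :: p.2.2 :: C') = dgF (FGen.t i (i+1)) := by
            have e2 : dgF p.2.1 + (dgF p.2.2 + degL C')
                = dgF (FGen.tb k l) + (dgF c + degL C') := by
              rw [← add_assoc, ← add_assoc, hsum]
            rw [hMd, e2, ← hMd (FGen.tb k l) c]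
            exact hdeg
          rcases hcond with hx | ⟨hy, hw⟩
          · -- p.2.1 not raising : mu1 drops
            rw [ih1 (mu1 (A ++ p.2.1 :: p.2.2 :: C')) ?_ (mu2 _) _ rfl rfl hdeg',
              smul_zero]
            rw [hM1, hx, hn1]
            by_cases hy : isRaise p.2.2 <;> simp [hy]
          · by_cases hx : isRaise p.2.1
            · -- mu1 equal, mu2 drops
              have hmu1eq : mu1 (A ++ p.2.1 :: p.2.2 :: C') = n1 := by
                rw [hM1, hx, hy, hn1]
                simp
              rw [ih2 (mu2 (A ++ p.2.1 :: p.2.2 :: C')) ?_ _ hmu1eq rfl hdeg',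
                smul_zero]
              rw [hM2, wgt_zero_of_clean hy, hn2]
              have : wgt p.2.1 < l - k := by
                have := hw
                simpa [wgt] using this
              omega
            · rw [ih1 (mu1 (A ++ p.2.1 :: p.2.2 :: C')) ?_ (mu2 _) _ rfl rfl hdeg',
                smul_zero]
              rw [hM1, hn1]
              simp only [hx, if_false]
              by_cases hy2 : isRaise p.2.2 <;> simp [hy2]

end SLem
section Sep

variable {Nn : ℕ} {q : ℂ} {s : ℕ → ZMod 2}
variable {V : Type} [AddCommGroup V] [Module ℂ V]
variable {ρ : UF Nn q s →ₐ[ℂ] Module.End ℂ V}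
variable {lam : ℕ → ℂ} {ζ : V}

lemma EigV_smul {ν : ℕ →₀ ℤ} {w : V} (h : EigV Nn q s ρ lam ν w) (c : ℂ) :
    EigV Nn q s ρ lam ν (c • w) := by
  intro j hj
  rw [map_smul, h j hj, smul_comm]

lemma list_sum_sub {α : Type*} (R : List α) (f1 f2 : α → V) :
    (R.map (fun t => f1 t - f2 t)).sum = (R.map f1).sum - (R.map f2).sum := by
  induction R with
  | nil => simp
  | cons a R ih => simp [ih]; abel

lemma sep_aux (hq0 : q ≠ 0) (hqru : ∀ k : ℕ, k ≠ 0 → q ^ k ≠ 1)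
    (hlam : ∀ j : ℕ, 1 ≤ j → j ≤ Nn → lam j ≠ 0)
    (hhw1 : ∀ j : ℕ, 1 ≤ j → j ≤ Nn → ρ (Tb Nn q s j j) ζ = lam j • ζ) :
    ∀ (n : ℕ) (terms : List ((ℕ →₀ ℤ) × V)), terms.length = n →
    (∀ t ∈ terms, t.1 ≠ 0 ∧ (∀ j, t.1 j ≠ 0 → inR Nn j) ∧ EigV Nn q s ρ lam t.1 t.2) →
    ζ = (terms.map Prod.snd).sum → ζ = 0 := by
  intro n
  induction n with
  | zero =>
      intro terms hlen hcond hsum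
      rw [List.length_eq_zero_iff] at hlen
      subst hlen
      simpa using hsum
  | succ n ih =>
      intro terms hlen hcond hsum
      match terms, hlen with
      | t :: R, hlen =>
      have hlenR : R.length = n := by simpa using hlen
      have ht := hcond t (List.mem_cons_self)
      obtain ⟨j₀, hj₀⟩ : ∃ a, t.1 a ≠ 0 := by
        have := Finsupp.ne_iff.mp ht.1
        simpa using this
      have hj₀R : inR Nn j₀ := ht.2.1 j₀ hj₀
      have hlj : lam j₀ ≠ 0 := hlam j₀ hj₀R.1 hj₀R.2
      set κ : (ℕ →₀ ℤ) × V → ℂ := fun t' => qp q s j₀ ^ (t'.1 j₀) * lam j₀ with hκ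
      -- apply the diagonal operator to the sum
      have hDsum : ρ (Tb Nn q s j₀ j₀) (((t :: R).map Prod.snd).sum)
          = ((t :: R).map (fun t' => κ t' • t'.2)).sum := by
        rw [map_list_sum, List.map_map]
        congr 1
        apply List.map_congr_left
        intro x hx
        simp only [Function.comp_apply]
        exact (hcond x hx).2.2 j₀ hj₀R
      have hA : lam j₀ • ζ = ((t :: R).map (fun t' => κ t' • t'.2)).sum := by
        rw [← hDsum, ← hsum]
        exact (hhw1 j₀ hj₀R.1 hj₀R.2).symm
      have hB : lam j₀ • ζ = ((t :: R).map (fun t' => lam j₀ • t'.2)).sum := by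
        rw [hsum, List.smul_sum, List.map_map]
        rfl
      have h0 : ((t :: R).map (fun t' => (κ t' - lam j₀) • t'.2)).sum = 0 := by
        have e : ((t :: R).map (fun t' => (κ t' - lam j₀) • t'.2))
            = ((t :: R).map (fun t' => κ t' • t'.2 - lam j₀ • t'.2)) := by
          apply List.map_congr_left
          intro x _
          rw [sub_smul]
        rw [e, list_sum_sub, ← hA, ← hB, sub_self]
      rw [List.map_cons, List.sum_cons] at h0
      set c : ℂ := κ t - lam j₀ with hc
      have hcne : c ≠ 0 := by
        have e : c = (qp q s j₀ ^ (t.1 j₀) - 1) * lam j₀ := by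
          rw [hc, hκ]; ring
        rw [e]
        exact mul_ne_zero
          (sub_ne_zero.mpr (qp_zpow_ne_one hq0 hqru s j₀ _ hj₀)) hlj
      have ht2 : t.2 = c⁻¹ • (-(R.map (fun t' => (κ t' - lam j₀) • t'.2)).sum) := by
        rw [eq_inv_smul_iff₀ hcne]
        have := add_eq_zero_iff_eq_neg.mp h0
        exact this
      -- new list of terms
      set newterms : List ((ℕ →₀ ℤ) × V) :=
        R.map (fun t' => (t'.1, (1 - c⁻¹ * (κ t' - lam j₀)) • t'.2)) with hnew
      have hnewlen : newterms.length = n := by simp [hnew, hlenR]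
      have hnewcond : ∀ t' ∈ newterms, t'.1 ≠ 0 ∧ (∀ j, t'.1 j ≠ 0 → inR Nn j)
          ∧ EigV Nn q s ρ lam t'.1 t'.2 := by
        intro t' ht'
        rw [hnew, List.mem_map] at ht'
        obtain ⟨x, hx, rfl⟩ := ht'
        have hxc := hcond x (List.mem_cons_of_mem _ hx)
        exact ⟨hxc.1, hxc.2.1, EigV_smul hxc.2.2 _⟩
      have hnewsum : ζ = (newterms.map Prod.snd).sum := by
        rw [hnew, List.map_map]
        have e : (R.map (Prod.snd ∘ fun t' => (t'.1, (1 - c⁻¹ * (κ t' - lam j₀)) • t'.2)))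
            = R.map (fun t' => t'.2 - (c⁻¹ * (κ t' - lam j₀)) • t'.2) := by
          apply List.map_congr_left
          intro x _
          simp only [Function.comp_apply]
          rw [sub_smul, one_smul]
        rw [e, list_sum_sub]
        have e2 : (R.map (fun t' => (c⁻¹ * (κ t' - lam j₀)) • t'.2)).sum
            = c⁻¹ • ((R.map (fun t' => (κ t' - lam j₀) • t'.2)).sum) := by
          rw [List.smul_sum, List.map_map]
          congr 1
          apply List.map_congr_left
          intro x _
          simp only [Function.comp_apply]
          rw [smul_smul]
        rw [e2]
        rw [hsum, List.map_cons, List.sum_cons, ht2, smul_neg]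
        abel
      exact ih newterms hnewlen hnewcond hnewsum

end Sep
section Assemble

variable {Nn : ℕ} {q : ℂ} {s : ℕ → ZMod 2}
variable {V : Type} [AddCommGroup V] [Module ℂ V]

/-- evaluation of the action on a fixed vector, as a linear map. -/
def Tvmap (ρ : UF Nn q s →ₐ[ℂ] Module.End ℂ V) (v : V) : UF Nn q s →ₗ[ℂ] V where
  toFun X := ρ X v
  map_add' a b := by simp [map_add]
  map_smul' c a := by simp [map_smul]

lemma Tvmap_apply (ρ : UF Nn q s →ₐ[ℂ] Module.End ℂ V) (v : V) (X : UF Nn q s) :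
    Tvmap ρ v X = ρ X v := rfl

variable {ρ : UF Nn q s →ₐ[ℂ] Module.End ℂ V}
variable {lam : ℕ → ℂ} {ζ : V} {i : ℕ}

lemma gGood_gInR {g : FGen} (h : gGood Nn g) : gInR Nn g := by
  cases g with
  | t a b => exact ⟨h.1, h.2.1⟩
  | tb a b => exact ⟨h.1, h.2.1⟩

lemma degL_out (L : List FGen) (hall : ∀ g ∈ L, gInR Nn g) (j : ℕ) (hj : ¬ inR Nn j) :
    degL L j = 0 := by
  induction L with
  | nil => simp [degL]
  | cons g L ih =>
      rw [degL_cons, Finsupp.add_apply, ih (fun g' hg' => hall g' (List.mem_cons_of_mem _ hg')),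
        add_zero, dgF_apply]
      have h1 := (hall g (List.mem_cons_self)).1
      have h2 := (hall g (List.mem_cons_self)).2
      rw [if_neg (fun he => hj (by rw [← he]; exact h1)),
        if_neg (fun he => hj (by rw [← he]; exact h2)), sub_zero]

lemma Eop_mk (g : FGen) :
    Eop ρ g = ρ (RingQuot.mkAlgHom ℂ (FRel Nn q s) (FreeAlgebra.ι ℂ g)) := by
  cases g <;> rfl

lemma opL_eq (L : List FGen) :
    ρ (RingQuot.mkAlgHom ℂ (FRel Nn q s) ((L.map (FreeAlgebra.ι ℂ)).prod)) = opL ρ L := by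
  rw [map_list_prod, map_list_prod, List.map_map, List.map_map, opL]
  congr 1
  apply List.map_congr_left
  intro g _
  simp only [Function.comp_apply]
  exact (Eop_mk g).symm

lemma FA_span (x : FA) :
    x ∈ Submodule.span ℂ {y : FA | ∃ L : List FGen, y = (L.map (FreeAlgebra.ι ℂ)).prod} := by
  have h1 : x ∈ Subalgebra.toSubmodule (Algebra.adjoin ℂ (Set.range (FreeAlgebra.ι ℂ (X := FGen)))) := by
    rw [FreeAlgebra.adjoin_range_ι]
    trivial
  rw [Algebra.adjoin_eq_span] at h1
  refine Submodule.span_le.mpr ?_ h1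
  intro y hy
  obtain ⟨l, hl, rfl⟩ := Submonoid.exists_list_of_mem_closure hy
  have : ∀ l : List FA, (∀ y ∈ l, y ∈ Set.range (FreeAlgebra.ι ℂ (X := FGen))) →
      ∃ L : List FGen, l = L.map (FreeAlgebra.ι ℂ) := by
    intro l
    induction l with
    | nil => exact fun _ => ⟨[], rfl⟩
    | cons a l ih =>
        intro hmem
        obtain ⟨L, rfl⟩ := ih (fun y hy => hmem y (List.mem_cons_of_mem _ hy))
        obtain ⟨g, rfl⟩ := hmem a (List.mem_cons_self)
        exact ⟨g :: L, rfl⟩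
  obtain ⟨L, rfl⟩ := this l hl
  apply Submodule.subset_span
  exact ⟨L, rfl⟩

lemma EigL (hq0 : q ≠ 0)
    (hhw1 : ∀ j : ℕ, 1 ≤ j → j ≤ Nn → ρ (Tb Nn q s j j) ζ = lam j • ζ)
    (hi1 : 1 ≤ i) (hi2 : i + 1 ≤ Nn) :
    ∀ L : List FGen, (∀ g ∈ L, gInR Nn g) →
      EigV Nn q s ρ lam (degL L + dgF (FGen.t (i+1) i))
        (opL ρ L (ρ (Tt Nn q s (i+1) i) ζ)) := by
  intro L
  induction L with
  | nil =>
      intro _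
      have h0 := EigV_step hq0 (EigV_zeta (ζ := ζ) hhw1)
        (g := FGen.t (i+1) i)
        (by refine ⟨⟨?_, ?_⟩, ?_, ?_⟩ <;> simp only [grow, gcol] <;> omega)
      rw [add_zero] at h0
      have e : degL [] + dgF (FGen.t (i+1) i) = dgF (FGen.t (i+1) i) := by
        simp [degL]
      rw [e]
      have e2 : opL ρ [] (ρ (Tt Nn q s (i+1) i) ζ) = Eop ρ (FGen.t (i+1) i) ζ := by
        rw [opL_nil, Module.End.one_apply, Eop_t]
      rw [e2]
      exact h0
  | cons g L ih =>
      intro hall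
      have h0 := EigV_step hq0 (ih (fun g' hg' => hall g' (List.mem_cons_of_mem _ hg')))
        (hall g (List.mem_cons_self))
      have e : dgF g + (degL L + dgF (FGen.t (i+1) i))
          = degL (g :: L) + dgF (FGen.t (i+1) i) := by
        rw [degL_cons, add_assoc]
      rw [e] at h0
      have e2 : opL ρ (g :: L) (ρ (Tt Nn q s (i+1) i) ζ)
          = Eop ρ g (opL ρ L (ρ (Tt Nn q s (i+1) i) ζ)) := opL_cons ρ g L _
      rw [e2]
      exact h0

/-- The heart of the theorem: atypicality forces `t_{i+1,i} ζ = 0`. -/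
lemma core_v_eq_zero (hq0 : q ≠ 0) (hqru : ∀ k : ℕ, k ≠ 0 → q ^ k ≠ 1)
    (hlam : ∀ j : ℕ, 1 ≤ j → j ≤ Nn → lam j ≠ 0)
    (hζ : ζ ≠ 0)
    (hhw0 : ∀ j k : ℕ, 1 ≤ j → j < k → k ≤ Nn → ρ (Tb Nn q s j k) ζ = 0)
    (hhw1 : ∀ j : ℕ, 1 ≤ j → j ≤ Nn → ρ (Tb Nn q s j j) ζ = lam j • ζ)
    (hirr : ∀ W : Submodule ℂ V,
      (∀ (x : UF Nn q s) (w : V), w ∈ W → ρ x w ∈ W) → W = ⊥ ∨ W = ⊤)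
    (hi1 : 1 ≤ i) (hi2 : i + 1 ≤ Nn) (hatyp : lam i = lam (i + 1)) :
    ρ (Tt Nn q s (i+1) i) ζ = 0 := by
  set v := ρ (Tt Nn q s (i+1) i) ζ with hv
  have hinv : ∀ (x : UF Nn q s) (w : V), w ∈ LinearMap.range (Tvmap ρ v) →
      ρ x w ∈ LinearMap.range (Tvmap ρ v) := by
    intro x w hw
    obtain ⟨Y, hY⟩ := hw
    refine ⟨x * Y, ?_⟩
    rw [Tvmap_apply, map_mul, Module.End.mul_apply, ← hY, Tvmap_apply]
  rcases hirr (LinearMap.range (Tvmap ρ v)) hinv with h | h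
  · have hvW : v ∈ LinearMap.range (Tvmap ρ v) := ⟨1, by rw [Tvmap_apply, map_one]; rfl⟩
    rw [h] at hvW
    simpa using hvW
  · exfalso
    have hζW : ζ ∈ LinearMap.range (Tvmap ρ v) := h ▸ Submodule.mem_top
    obtain ⟨X, hX⟩ := hζW
    obtain ⟨x, rfl⟩ := RingQuot.mkAlgHom_surjective ℂ (FRel Nn q s) X
    -- representability by eigenvectors
    have hrep : ∃ terms : List ((ℕ →₀ ℤ) × V),
        (∀ t ∈ terms, t.1 ≠ 0 ∧ (∀ j, t.1 j ≠ 0 → inR Nn j)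
          ∧ EigV Nn q s ρ lam t.1 t.2)
        ∧ Tvmap ρ v (RingQuot.mkAlgHom ℂ (FRel Nn q s) x) = (terms.map Prod.snd).sum := by
      have hx := FA_span x
      have himg := Submodule.apply_mem_span_image_of_mem_span
        ((Tvmap ρ v).comp (RingQuot.mkAlgHom ℂ (FRel Nn q s)).toLinearMap) hx
      have hP : ∀ u ∈ Submodule.span ℂ
          (((Tvmap ρ v).comp (RingQuot.mkAlgHom ℂ (FRel Nn q s)).toLinearMap) ''
            {y : FA | ∃ L : List FGen, y = (L.map (FreeAlgebra.ι ℂ)).prod}),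
          ∃ terms : List ((ℕ →₀ ℤ) × V),
            (∀ t ∈ terms, t.1 ≠ 0 ∧ (∀ j, t.1 j ≠ 0 → inR Nn j)
              ∧ EigV Nn q s ρ lam t.1 t.2)
            ∧ u = (terms.map Prod.snd).sum := by
        intro u hu
        induction hu using Submodule.span_induction with
        | mem y hy =>
            obtain ⟨m, ⟨L, rfl⟩, rfl⟩ := hy
            have heval : ((Tvmap ρ v).comp (RingQuot.mkAlgHom ℂ (FRel Nn q s)).toLinearMap)
                ((L.map (FreeAlgebra.ι ℂ)).prod) = opL ρ L v := by
              rw [LinearMap.comp_apply, AlgHom.toLinearMap_apply, Tvmap_apply, opL_eq]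
            rw [heval]
            by_cases hbad : ∃ g ∈ L, ¬ gGood Nn g
            · refine ⟨[], by simp, ?_⟩
              rw [opL_zero_of_bad hbad, LinearMap.zero_apply]
              simp
            · push_neg at hbad
              have hallR : ∀ g ∈ L, gInR Nn g := fun g hg => gGood_gInR (hbad g hg)
              by_cases hν : degL L + dgF (FGen.t (i+1) i) = 0
              · refine ⟨[], by simp, ?_⟩
                have hdeg : degL L = dgF (FGen.t i (i+1)) := by
                  have e : dgF (FGen.t i (i+1)) = - dgF (FGen.t (i+1) i) := by
                    simp only [dgF, grow, gcol]
                    abel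
                  rw [e, ← add_eq_zero_iff_eq_neg]
                  exact hν
                rw [Slem hq0 hlam hhw0 hhw1 hi1 hi2 hatyp (mu1 L) (mu2 L) L rfl rfl hdeg]
                simp
              · refine ⟨[(degL L + dgF (FGen.t (i+1) i), opL ρ L v)], ?_, by simp⟩
                intro t ht
                rw [List.mem_singleton] at ht
                subst ht
                refine ⟨hν, ?_, ?_⟩
                · intro j hj
                  by_contra hjR
                  apply hj
                  rw [Finsupp.add_apply, degL_out L hallR j hjR, zero_add, dgF_apply]
                  simp only [grow, gcol]
                  show ((if i + 1 = j then (1:ℤ) else 0) - (if i = j then 1 else 0)) = 0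
                  rw [if_neg (fun he : i + 1 = j => hjR (by subst he; exact ⟨by omega, hi2⟩)),
                    if_neg (fun he : i = j => hjR (by subst he; exact ⟨hi1, by omega⟩)),
                    sub_zero]
                · exact EigL hq0 hhw1 hi1 hi2 L hallR
        | zero => exact ⟨[], by simp, by simp⟩
        | add y z _ _ ihy ihz =>
            obtain ⟨t1, h1, e1⟩ := ihy
            obtain ⟨t2, h2, e2⟩ := ihz
            refine ⟨t1 ++ t2, ?_, ?_⟩
            · intro t ht
              rcases List.mem_append.mp ht with ht | ht
              · exact h1 t ht
              · exact h2 t ht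
            · rw [List.map_append, List.sum_append, e1, e2]
        | smul c y _ ihy =>
            obtain ⟨t1, h1, e1⟩ := ihy
            refine ⟨t1.map (fun t => (t.1, c • t.2)), ?_, ?_⟩
            · intro t ht
              rw [List.mem_map] at ht
              obtain ⟨t', ht', rfl⟩ := ht
              exact ⟨(h1 t' ht').1, (h1 t' ht').2.1, EigV_smul (h1 t' ht').2.2 c⟩
            · rw [e1, List.map_map, List.smul_sum, List.map_map]
              rfl
      exact hP _ himg
    obtain ⟨terms, hcond, hsum⟩ := hrep
    have : ζ = 0 := by
      apply sep_aux hq0 hqru hlam hhw1 terms.length terms rfl hcond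
      rw [← hX, ← hsum]
    exact hζ this
  
end Assemble
lemma neg1_inv (x : ZMod 2) : (neg1 x)⁻¹ = neg1 x := by
  unfold neg1; split <;> norm_num

section Final

variable {Nn : ℕ} {q : ℂ} {s s' : ℕ → ZMod 2}
variable {V : Type} [AddCommGroup V] [Module ℂ V]
variable {ρ : UF Nn q s →ₐ[ℂ] Module.End ℂ V}

lemma hkey (β : UF Nn q s ≃ₐ[ℂ] UF Nn q s') (X : UF Nn q s) (Y : UF Nn q s') (a : ℂ)
    (ha : a ≠ 0) (h : β X = a • Y) :
    (ρ.comp β.symm.toAlgHom) Y = a⁻¹ • ρ X := by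
  have h2 : β.symm Y = a⁻¹ • X := by
    have h3 := congrArg β.symm h
    rw [AlgEquiv.symm_apply_apply, map_smul] at h3
    rw [h3, inv_smul_smul₀ ha]
  show ρ (β.symm.toAlgHom Y) = a⁻¹ • ρ X
  have : β.symm.toAlgHom Y = β.symm Y := rfl
  rw [this, h2, map_smul]

lemma hFbeta (β : UF Nn q s ≃ₐ[ℂ] UF Nn q s') (X : UF Nn q s) :
    (ρ.comp β.symm.toAlgHom) (β X) = ρ X := by
  show ρ (β.symm.toAlgHom (β X)) = ρ X
  have : β.symm.toAlgHom (β X) = β.symm (β X) := rfl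
  rw [this, AlgEquiv.symm_apply_apply]

end Final
/-- The defining clauses of the odd-reflection isomorphism
`β_{i,s} : U_q(gl_{m|n,s}) → U_q(gl_{m|n,s′})` on the RTT generators
(here `s′ = σ_i(s)`). -/
def OddReflClauses (Nn : ℕ) (q : ℂ) (s s' : ℕ → ZMod 2) (i : ℕ)
    (f : UF Nn q s ≃ₐ[ℂ] UF Nn q s') : Prop :=
  f (Tt Nn q s i i) = neg1 (s' i) • Tt Nn q s' (i + 1) (i + 1) ∧
  f (Tt Nn q s (i + 1) (i + 1)) = neg1 (s' (i + 1)) • Tt Nn q s' i i ∧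
  f (Tt Nn q s (i + 1) i)
    = (neg1 (s' i) * neg1 (s' (i + 1)) * (qp q s' i)⁻¹) •
        (Tb Nn q s' i (i + 1) * (Tt Nn q s' i i * Tt Nn q s' i i)) ∧
  (∀ k : ℕ, k < i →
    f (Tt Nn q s i k)
      = (sg s' (i - 1) i i (i + 1) * (qp q s' i)⁻¹) • Tt Nn q s' (i + 1) k
        - (sg s' k (i - 1) i (i + 1)) •
            (Tb Nn q s' i i * Tt Nn q s' (i + 1) i * Tt Nn q s' i k)) ∧
  (∀ k : ℕ, k < i →
    f (Tt Nn q s (i + 1) k)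
      = (-(sg s' (i - 1) i i (i + 1) * neg1 (s' (i + 1)))) • Tt Nn q s' i k) ∧
  (∀ l : ℕ, i + 2 ≤ l →
    f (Tt Nn q s l i)
      = (sg s' i (i + 1) i (i + 2) * qp q s' i) • Tt Nn q s' l (i + 1)
        - (sg s' i (i + 1) (i + 2) l) •
            (Tt Nn q s' i i * Tt Nn q s' l i * Tb Nn q s' i (i + 1))) ∧
  (∀ l : ℕ, i + 2 ≤ l →
    f (Tt Nn q s l (i + 1))
      = (-(sg s' i (i + 1) (i + 1) (i + 2) * neg1 (s' (i + 1)))) • Tt Nn q s' l i) ∧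
  (∀ l k : ℕ, ¬ (l = i ∧ k = i) → ¬ (l = i + 1 ∧ k = i + 1) → ¬ (l = i + 1 ∧ k = i) →
    ¬ (l = i ∧ k < i) → ¬ (l = i + 1 ∧ k < i) →
    ¬ (k = i ∧ i + 2 ≤ l) → ¬ (k = i + 1 ∧ i + 2 ≤ l) →
    f (Tt Nn q s l k) = Tt Nn q s' l k) ∧
  f (Tb Nn q s i i) = neg1 (s' i) • Tb Nn q s' (i + 1) (i + 1) ∧
  f (Tb Nn q s (i + 1) (i + 1)) = neg1 (s' (i + 1)) • Tb Nn q s' i i ∧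
  f (Tb Nn q s i (i + 1))
    = (qp q s' i) • (Tb Nn q s' i i * Tb Nn q s' i i * Tt Nn q s' (i + 1) i) ∧
  (∀ k : ℕ, k < i →
    f (Tb Nn q s k i)
      = (sg s' (i - 1) i i (i + 1) * neg1 (s' i) * qp q s' i) • Tb Nn q s' k (i + 1)
        - (sg s' k (i - 1) i (i + 1) * neg1 (s' i)) •
            (Tb Nn q s' k i * Tb Nn q s' i (i + 1) * Tt Nn q s' i i)) ∧
  (∀ k : ℕ, k < i →
    f (Tb Nn q s k (i + 1)) = (-(sg s' (i - 1) i i (i + 1))) • Tb Nn q s' k i) ∧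
  (∀ l : ℕ, i + 2 ≤ l →
    f (Tb Nn q s i l)
      = (sg s' i (i + 1) i (i + 2) * neg1 (s' i) * (qp q s' i)⁻¹) • Tb Nn q s' (i + 1) l
        - (sg s' i (i + 1) (i + 2) l * neg1 (s' i)) •
            (Tt Nn q s' (i + 1) i * Tb Nn q s' i l * Tb Nn q s' i i)) ∧
  (∀ l : ℕ, i + 2 ≤ l →
    f (Tb Nn q s (i + 1) l) = (-(sg s' i (i + 1) (i + 1) (i + 2))) • Tb Nn q s' i l) ∧
  (∀ k l : ℕ, ¬ (k = i ∧ l = i) → ¬ (k = i + 1 ∧ l = i + 1) → ¬ (k = i ∧ l = i + 1) →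
    ¬ (l = i ∧ k < i) → ¬ (l = i + 1 ∧ k < i) →
    ¬ (k = i ∧ i + 2 ≤ l) → ¬ (k = i + 1 ∧ i + 2 ≤ l) →
    f (Tb Nn q s k l) = Tb Nn q s' k l)

/-- Transition rule through an odd reflection, atypical case:
if `λ_i = λ_{i+1}` then the transported module is an irreducible highest weight module
with the *same* maximal vector `ζ` and (up to a sign twist) highest weight
`(λ_1, …, λ_{i−1}, λ_{i+1}, λ_i, λ_{i+2}, …, λ_N)`. -/
theorem odd_reflection_transition_atypical (m n Nn : ℕ) (hNn : Nn = m + n) (hN2 : 2 ≤ Nn)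
    (s : ℕ → ZMod 2)
    (hm : ((Finset.Icc 1 Nn).filter (fun i => s i = 0)).card = m)
    (hn : ((Finset.Icc 1 Nn).filter (fun i => s i = 1)).card = n)
    (q : ℂ) (hq0 : q ≠ 0) (hqru : ∀ k : ℕ, k ≠ 0 → q ^ k ≠ 1)
    (i : ℕ) (hi1 : 1 ≤ i) (hi2 : i + 1 ≤ Nn) (hodd : s i ≠ s (i + 1))
    (s' : ℕ → ZMod 2)
    (hs' : ∀ j : ℕ, s' j = if j = i then s (i + 1) else if j = i + 1 then s i else s j)
    (β : UF Nn q s ≃ₐ[ℂ] UF Nn q s') (hβ : OddReflClauses Nn q s s' i β)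
    (V : Type) [AddCommGroup V] [Module ℂ V]
    (ρ : UF Nn q s →ₐ[ℂ] Module.End ℂ V)
    (lam : ℕ → ℂ) (hlam : ∀ j : ℕ, 1 ≤ j → j ≤ Nn → lam j ≠ 0)
    (ζ : V) (hζ : ζ ≠ 0)
    (hhw0 : ∀ j k : ℕ, 1 ≤ j → j < k → k ≤ Nn → ρ (Tb Nn q s j k) ζ = 0)
    (hhw1 : ∀ j : ℕ, 1 ≤ j → j ≤ Nn → ρ (Tb Nn q s j j) ζ = lam j • ζ)
    (hgen : Function.Surjective (fun x : UF Nn q s => ρ x ζ))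
    (hirr : ∀ W : Submodule ℂ V,
      (∀ (x : UF Nn q s) (w : V), w ∈ W → ρ x w ∈ W) → W = ⊥ ∨ W = ⊤)
    (hatyp : lam i = lam (i + 1)) :
    (∀ j k : ℕ, 1 ≤ j → j < k → k ≤ Nn →
      (ρ.comp β.symm.toAlgHom) (Tb Nn q s' j k) ζ = 0) ∧
    (∃ ε : ℕ → ℂ, (∀ j : ℕ, ε j = 1 ∨ ε j = -1) ∧
      ∀ j : ℕ, 1 ≤ j → j ≤ Nn →
        (ρ.comp β.symm.toAlgHom) (Tb Nn q s' j j) ζ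
          = (ε j * (if j = i then lam (i + 1)
              else if j = i + 1 then lam i else lam j)) • ζ) ∧
    Function.Surjective (fun x : UF Nn q s' => (ρ.comp β.symm.toAlgHom) x ζ) ∧
    (∀ W : Submodule ℂ V,
      (∀ (x : UF Nn q s') (w : V), w ∈ W → (ρ.comp β.symm.toAlgHom) x w ∈ W) →
      W = ⊥ ∨ W = ⊤) := by
  obtain ⟨c1, c2, c3, c4, c5, c6, c7, c8, c9, c10, c11, c12, c13, c14, c15, c16⟩ := hβ
  have hri : inR Nn i := ⟨hi1, by omega⟩
  have hri1 : inR Nn (i+1) := ⟨by omega, hi2⟩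
  have hl1 : lam (i+1) ≠ 0 := hlam (i+1) (by omega) hi2
  have hcore : ρ (Tt Nn q s (i+1) i) ζ = 0 :=
    core_v_eq_zero hq0 hqru hlam hζ hhw0 hhw1 hirr hi1 hi2 hatyp
  have hFt_ii : (ρ.comp β.symm.toAlgHom) (Tt Nn q s' i i) ζ
      = (neg1 (s' (i+1)) * (lam (i+1))⁻¹) • ζ := by
    rw [hkey β _ _ _ (neg1_ne_zero _) c2, LinearMap.smul_apply,
      Tt_diag_apply hhw1 hlam hri1, smul_smul, neg1_inv]
  have hFb_ii : (ρ.comp β.symm.toAlgHom) (Tb Nn q s' i i) ζ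
      = (neg1 (s' (i+1)) * lam (i+1)) • ζ := by
    rw [hkey β _ _ _ (neg1_ne_zero _) c10, LinearMap.smul_apply,
      hhw1 (i+1) (by omega) hi2, smul_smul, neg1_inv]
  have hFb_i1 : (ρ.comp β.symm.toAlgHom) (Tb Nn q s' (i+1) (i+1)) ζ
      = (neg1 (s' i) * lam i) • ζ := by
    rw [hkey β _ _ _ (neg1_ne_zero _) c9, LinearMap.smul_apply,
      hhw1 i hi1 (by omega), smul_smul, neg1_inv]
  -- the odd raising operator kills ζ (uses atypicality via hcore)
  have hFb_e : (ρ.comp β.symm.toAlgHom) (Tb Nn q s' i (i+1)) ζ = 0 := by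
    have h3 := congrArg (ρ.comp β.symm.toAlgHom) c3
    rw [hFbeta β] at h3
    have h3' := congrArg (fun T : Module.End ℂ V => T ζ) h3
    simp only [map_smul, map_mul, LinearMap.smul_apply, Module.End.mul_apply] at h3'
    have hin : (ρ.comp β.symm.toAlgHom) (Tt Nn q s' i i)
        ((ρ.comp β.symm.toAlgHom) (Tt Nn q s' i i) ζ)
        = ((neg1 (s' (i+1)) * (lam (i+1))⁻¹) * (neg1 (s' (i+1)) * (lam (i+1))⁻¹)) • ζ := by
      rw [hFt_ii, map_smul, hFt_ii, smul_smul]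
    rw [hcore, hin, map_smul, smul_smul] at h3'
    have hsc : neg1 (s' i) * neg1 (s' (i + 1)) * (qp q s' i)⁻¹
        * (neg1 (s' (i + 1)) * (lam (i + 1))⁻¹ * (neg1 (s' (i + 1)) * (lam (i + 1))⁻¹))
        ≠ 0 := by
      apply mul_ne_zero
      · exact mul_ne_zero (mul_ne_zero (neg1_ne_zero _) (neg1_ne_zero _))
          (inv_ne_zero (qp_ne_zero hq0 s' i))
      · exact mul_ne_zero (mul_ne_zero (neg1_ne_zero _) (inv_ne_zero hl1))
          (mul_ne_zero (neg1_ne_zero _) (inv_ne_zero hl1))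
    rcases smul_eq_zero.mp h3'.symm with h | h
    · exact absurd h hsc
    · exact h
  -- raising values that are directly images of raising generators
  have hFb_ki : ∀ k, 1 ≤ k → k < i → (ρ.comp β.symm.toAlgHom) (Tb Nn q s' k i) ζ = 0 := by
    intro k hk1 hki
    rw [hkey β _ _ _ (neg_ne_zero.mpr (sg_ne_zero s' (i-1) i i (i+1))) (c13 k hki),
      LinearMap.smul_apply, hhw0 k (i+1) hk1 (by omega) hi2, smul_zero]
  have hFb_il : ∀ l, i + 2 ≤ l → l ≤ Nn →
      (ρ.comp β.symm.toAlgHom) (Tb Nn q s' i l) ζ = 0 := by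
    intro l hl hlN
    rw [hkey β _ _ _ (neg_ne_zero.mpr (sg_ne_zero s' i (i+1) (i+1) (i+2))) (c15 l hl),
      LinearMap.smul_apply, hhw0 (i+1) l (by omega) (by omega) hlN, smul_zero]
  have hFb_ki1 : ∀ k, 1 ≤ k → k < i →
      (ρ.comp β.symm.toAlgHom) (Tb Nn q s' k (i+1)) ζ = 0 := by
    intro k hk1 hki
    have h12 := congrArg (ρ.comp β.symm.toAlgHom) (c12 k hki)
    rw [hFbeta β] at h12
    have h12' := congrArg (fun T : Module.End ℂ V => T ζ) h12
    simp only [map_sub, map_smul, map_mul, LinearMap.sub_apply, LinearMap.smul_apply,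
      Module.End.mul_apply] at h12'
    rw [hhw0 k i hk1 hki (by omega), hFt_ii, map_smul, hFb_e, smul_zero, map_zero,
      smul_zero, sub_zero] at h12'
    rcases smul_eq_zero.mp h12'.symm with h | h
    · exfalso
      exact (mul_ne_zero (mul_ne_zero (sg_ne_zero s' (i-1) i i (i+1)) (neg1_ne_zero _))
        (qp_ne_zero hq0 s' i)) h
    · exact h
  have hFb_i1l : ∀ l, i + 2 ≤ l → l ≤ Nn →
      (ρ.comp β.symm.toAlgHom) (Tb Nn q s' (i+1) l) ζ = 0 := by
    intro l hl hlN
    have h14 := congrArg (ρ.comp β.symm.toAlgHom) (c14 l hl)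
    rw [hFbeta β] at h14
    have h14' := congrArg (fun T : Module.End ℂ V => T ζ) h14
    simp only [map_sub, map_smul, map_mul, LinearMap.sub_apply, LinearMap.smul_apply,
      Module.End.mul_apply] at h14'
    rw [hhw0 i l hi1 (by omega) hlN, hFb_ii, map_smul, hFb_il l hl hlN, smul_zero,
      map_zero, smul_zero, sub_zero] at h14'
    rcases smul_eq_zero.mp h14'.symm with h | h
    · exfalso
      exact (mul_ne_zero (mul_ne_zero (sg_ne_zero s' i (i+1) i (i+2)) (neg1_ne_zero _))
        (inv_ne_zero (qp_ne_zero hq0 s' i))) h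
    · exact h
  refine ⟨?_, ?_, ?_, ?_⟩
  · -- highest weight property
    intro j k hj1 hjk hk2
    by_cases hki : k = i
    · subst hki
      exact hFb_ki j hj1 hjk
    by_cases hki1 : k = i + 1
    · subst hki1
      by_cases hji : j = i
      · subst hji
        exact hFb_e
      · exact hFb_ki1 j hj1 (by omega)
    by_cases hji : j = i
    · subst hji
      exact hFb_il k (by omega) hk2
    by_cases hji1 : j = i + 1
    · subst hji1
      exact hFb_i1l k (by omega) hk2
    · rw [← c16 j k (by omega) (by omega) (by omega) (by omega) (by omega) (by omega)
        (by omega), hFbeta β]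
      exact hhw0 j k hj1 hjk hk2
  · -- the new highest weight, up to signs
    refine ⟨fun j => if j = i then neg1 (s' (i+1)) else if j = i + 1 then neg1 (s' i)
      else 1, ?_, ?_⟩
    · intro j
      by_cases h1 : j = i
      · simp only [h1, if_pos rfl]
        exact neg1_cases _
      · by_cases h2 : j = i + 1
        · simp only [h2, if_neg (by omega : ¬ i + 1 = i), if_pos rfl]
          exact neg1_cases _
        · simp [h1, h2]
    · intro j hj1 hj2
      by_cases h1 : j = i
      · subst h1
        simp only [if_pos rfl]
        exact hFb_ii
      · by_cases h2 : j = i + 1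
        · subst h2
          simp only [if_neg (by omega : ¬ i + 1 = i), if_pos rfl]
          exact hFb_i1
        · simp only [if_neg h1, if_neg h2, one_mul]
          rw [← c16 j j (by omega) (by omega) (by omega) (by omega) (by omega) (by omega)
            (by omega), hFbeta β]
          exact hhw1 j hj1 hj2
  · -- the transported module is generated by ζ
    intro w
    obtain ⟨X, hX⟩ := hgen w
    refine ⟨β X, ?_⟩
    show (ρ.comp β.symm.toAlgHom) (β X) ζ = w
    rw [hFbeta β]
    exact hX
  · -- irreducibility of the transported module
    intro W hW
    apply hirr W
    intro x w hw
    have := hW (β x) w hw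
    rwa [hFbeta β] at this
end

end Stmt10
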